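/- Let S be a set of pairs (i,j) with 1 ≤ i < j ≤ n such that U_S := {I_n + Σ_{(i,j)∈S} a_{ij} E_{ij} : a_{ij} ∈ F} is a subgroup of the unit upper triangular group U_n. Then every element of U_S is a product of at most |S| matrices of the form I_n + λ E_{ij} with (i,j) ∈ S and λ ∈ F. -/

import Mathlib

open Matrix
open scoped Classical

private lemma elem_decomp {F : Type*} [Field F] {n : ℕ}
    (S : Finset (Fin n × Fin n)) (hS : ∀ p ∈ S, p.1 < p.2) :
    ∀ N : ℕ, ∀ a : Fin n × Fin n → F,
      (S.filter fun q => a q ≠ 0).card ≤ N →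
      ∃ L : List (Matrix (Fin n) (Fin n) F),
        L.length ≤ (S.filter fun q => a q ≠ 0).card ∧
        (∀ M ∈ L, ∃ p ∈ S, ∃ l : F, M = 1 + l • Matrix.single p.1 p.2 (1 : F)) ∧
        1 + ∑ p ∈ S, a p • Matrix.single p.1 p.2 (1 : F) = L.prod := by
  intro N
  induction N with
  | zero =>
    intro a ha
    refine ⟨[], by simp, by simp, ?_⟩
    have h0 : ∀ q ∈ S, a q • Matrix.single q.1 q.2 (1:F) = 0 := by
      intro q hq
      have haq : a q = 0 := by
        by_contra h
        have hq' : q ∈ S.filter fun q => a q ≠ 0 := Finset.mem_filter.2 ⟨hq, h⟩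
        have := Finset.card_pos.2 ⟨q, hq'⟩
        omega
      simp [haq]
    rw [Finset.sum_eq_zero h0, add_zero, List.prod_nil]
  | succ N ih =>
    intro a ha
    rcases (S.filter fun q => a q ≠ 0).eq_empty_or_nonempty with hTe | hTne
    · exact ih a (by simp [hTe])
    · obtain ⟨p, hpT, hpmax⟩ := Finset.exists_max_image _ (fun q => q.2) hTne
      obtain ⟨hpS, hap⟩ := Finset.mem_filter.1 hpT
      set a' : Fin n × Fin n → F := Function.update a p 0 with ha'
      -- filter for a' is erase p of filter for a
      have hfilt : (S.filter fun q => a' q ≠ 0) = (S.filter fun q => a q ≠ 0).erase p := by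
        ext q
        simp only [Finset.mem_filter, Finset.mem_erase, ha', Function.update]
        by_cases hqp : q = p <;> simp [hqp]
      have hcard : (S.filter fun q => a' q ≠ 0).card ≤ N := by
        rw [hfilt, Finset.card_erase_of_mem hpT]; omega
      obtain ⟨L', hL'len, hL'mem, hL'prod⟩ := ih a' hcard
      refine ⟨(1 + a p • Matrix.single p.1 p.2 (1:F)) :: L', ?_, ?_, ?_⟩
      · have : (S.filter fun q => a q ≠ 0).card = (S.filter fun q => a' q ≠ 0).card + 1 := by
          rw [hfilt, Finset.card_erase_of_mem hpT]
          have := Finset.card_pos.2 ⟨p, hpT⟩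
          omega
        simp only [List.length_cons]
        omega
      · intro M hM
        rcases List.mem_cons.1 hM with h | h
        · exact ⟨p, hpS, a p, h⟩
        · exact hL'mem M h
      · -- key computation
        have hzero : ∀ q ∈ S, q.1 = p.2 → a' q = 0 := by
          intro q hq hq1
          by_cases hqp : q = p
          · simp [ha', hqp]
          · simp only [ha', Function.update, dif_neg hqp]
            by_contra h
            have hqT : q ∈ S.filter fun q => a q ≠ 0 := Finset.mem_filter.2 ⟨hq, h⟩
            have h1 := hpmax q hqT
            have h2 := hS q hq
            rw [hq1] at h2
            exact absurd h1 (not_le.2 h2)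
        have hcross : (Matrix.single p.1 p.2 (1:F)) *
            (∑ q ∈ S, a' q • Matrix.single q.1 q.2 (1:F)) = 0 := by
          rw [Finset.mul_sum]
          refine Finset.sum_eq_zero fun q hq => ?_
          by_cases hq1 : q.1 = p.2
          · rw [hzero q hq hq1]; simp
          · rw [mul_smul_comm, Matrix.single_mul_single_of_ne (c := (1:F)) p.1 p.2 q.1 (Ne.symm hq1) 1, smul_zero]
        have hsum : ∑ q ∈ S, a q • Matrix.single q.1 q.2 (1:F) =
            a p • Matrix.single p.1 p.2 (1:F) +
            ∑ q ∈ S, a' q • Matrix.single q.1 q.2 (1:F) := by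
          rw [← Finset.add_sum_erase _ _ hpS, ← Finset.add_sum_erase _ _ hpS]
          have : a' p = 0 := by simp [ha']
          rw [this]
          simp only [zero_smul, zero_add]
          congr 1
          refine Finset.sum_congr rfl fun q hq => ?_
          have hqp : q ≠ p := Finset.ne_of_mem_erase hq
          simp [ha', Function.update, hqp]
        rw [List.prod_cons, ← hL'prod, hsum]
        ring_nf
        rw [mul_add, mul_one, add_mul, one_mul, smul_mul_assoc, hcross]
        rw [smul_zero, add_zero, add_assoc]
      
theorem subgroup_generated_by_elementaries {F : Type*} [Field F] {n : ℕ}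
    (S : Finset (Fin n × Fin n)) (hS : ∀ p ∈ S, p.1 < p.2)
    (US : Set (Matrix (Fin n) (Fin n) F))
    (hUS : US = {X | ∃ a : Fin n × Fin n → F,
      X = 1 + ∑ p ∈ S, a p • Matrix.single p.1 p.2 (1 : F)})
    (hmul : ∀ X ∈ US, ∀ Y ∈ US, X * Y ∈ US)
    (hinv : ∀ X ∈ US, X⁻¹ ∈ US) :
    ∀ X ∈ US, ∃ L : List (Matrix (Fin n) (Fin n) F),
      L.length ≤ S.card ∧
      (∀ M ∈ L, ∃ p ∈ S, ∃ l : F, M = 1 + l • Matrix.single p.1 p.2 (1 : F)) ∧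
      X = L.prod := by
  classical
  intro X hX
  rw [hUS] at hX
  obtain ⟨a, rfl⟩ := hX
  obtain ⟨L, hlen, hmem, hprod⟩ :=
    elem_decomp S hS (S.filter fun q => a q ≠ 0).card a le_rfl
  exact ⟨L, le_trans hlen (Finset.card_filter_le _ _), hmem, hprod⟩
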